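/- Let Γ be a finite simple graph with a k-coloring, i.e., a partition of its vertices into k independent sets of sizes n_1,…,n_k (so n_1 + ⋯ + n_k = |V(Γ)|). Then there is a surjective group homomorphism from the right-angled Artin group A(Γ) onto the direct product F_{n_1} × ⋯ × F_{n_k} of free groups of ranks n_1,…,n_k. -/

import Mathlib

/-- The defining relators of a right-angled Artin group: one commutator per edge. -/
def raagRels {V : Type} (Γ : SimpleGraph V) : Set (FreeGroup V) :=
  {r | ∃ v w : V, Γ.Adj v w ∧
    r = FreeGroup.of v * FreeGroup.of w * (FreeGroup.of v)⁻¹ * (FreeGroup.of w)⁻¹}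

/-- The right-angled Artin group on the graph `Γ`. -/
abbrev RAAG {V : Type} (Γ : SimpleGraph V) : Type := PresentedGroup (raagRels Γ)

/-- If a finite simple graph `Γ` admits a proper `k`-coloring `κ`, then `A(Γ)` surjects
onto the direct product of the free groups on the `k` color classes (free groups of ranks
`n₁, …, n_k` with `n₁ + ⋯ + n_k = |V(Γ)|`). -/
theorem raag_surjects_onto_product_of_free_groups_of_coloring {V : Type} [Fintype V]
    (Γ : SimpleGraph V) (k : ℕ) (κ : V → Fin k)
    (hκ : ∀ v w : V, Γ.Adj v w → κ v ≠ κ w) :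
    ∃ f : RAAG Γ →* ((i : Fin k) → FreeGroup {v : V // κ v = i}),
      Function.Surjective f := by
  classical
  set G := (i : Fin k) → FreeGroup {v : V // κ v = i} with hG
  -- the map on generators
  set F : V → G := fun v => Pi.mulSingle (κ v) (FreeGroup.of (⟨v, rfl⟩ : {w : V // κ w = κ v}))
    with hF
  have hcomm : ∀ v w : V, κ v ≠ κ w → Commute (F v) (F w) := by
    intro v w hne
    exact (Pi.mulSingle_commute hne _ _)
  have hrel : ∀ r ∈ raagRels Γ, FreeGroup.lift F r = 1 := by
    rintro r ⟨v, w, hadj, rfl⟩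
    simp only [map_mul, map_inv, FreeGroup.lift_apply_of]
    have h := (hcomm v w (hκ v w hadj)).eq
    group
    rw [h]
    group
  refine ⟨PresentedGroup.toGroup hrel, ?_⟩
  -- range is a subgroup; show it contains all mulSingles, hence everything
  set f := PresentedGroup.toGroup hrel with hf
  have hof : ∀ v, f (PresentedGroup.of v) = F v := fun v => PresentedGroup.toGroup.of hrel
  have hsingle : ∀ (i : Fin k) (x : FreeGroup {v : V // κ v = i}),
      Pi.mulSingle i x ∈ f.range := by
    intro i x
    induction x using FreeGroup.induction_on with
    | C1 => simpa using f.range.one_mem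
    | of v =>
        obtain ⟨v, hv⟩ := v
        refine ⟨PresentedGroup.of v, ?_⟩
        rw [hof]
        subst hv
        rfl
    | inv_of v hv =>
        rw [Pi.mulSingle_inv]
        exact f.range.inv_mem hv
    | mul x y hx hy =>
        rw [Pi.mulSingle_mul]
        exact f.range.mul_mem hx hy
  intro g
  rw [← Finset.noncommProd_mulSingle g]
  exact Subgroup.noncommProd_mem f.range _ fun i _ => hsingle i (g i)
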